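/- For the ring R = ℤ/3 ⊕ ℤ/3, the longest induced cycle in the Jacobson graph of R has length 4. -/

import Mathlib

open scoped Classical

/-- The Jacobson graph of a commutative ring `R`. -/
def jacobsonGraph (R : Type*) [CommRing R] :
    SimpleGraph {x : R // x ∉ Ideal.jacobson (⊥ : Ideal R)} where
  Adj x y := x ≠ y ∧ ¬ IsUnit (1 - (x : R) * y)
  symm := ⟨by
    rintro x y ⟨h1, h2⟩
    exact ⟨h1.symm, by rwa [mul_comm] at h2⟩⟩
  loopless := ⟨fun x ⟨h, _⟩ => h rfl⟩

/-- An induced (chordless) cycle in a simple graph. -/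
def IsInducedCycle {V : Type*} {G : SimpleGraph V} {u : V} (p : G.Walk u u) : Prop :=
  p.IsCycle ∧ ∀ x ∈ p.support, ∀ y ∈ p.support, G.Adj x y → s(x, y) ∈ p.edges

/-- An induced (chordless) path in a simple graph. -/
def IsInducedPath {V : Type*} {G : SimpleGraph V} {u v : V} (p : G.Walk u v) : Prop :=
  p.IsPath ∧ ∀ x ∈ p.support, ∀ y ∈ p.support, G.Adj x y → s(x, y) ∈ p.edges

open SimpleGraph

section Generic
variable {V : Type*} [DecidableEq V] {G : SimpleGraph V}

lemma path_endpoint_countP_le_one : ∀ {y x : V} (r : G.Walk y x), r.IsPath →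
    r.edges.countP (fun e => x ∈ e) ≤ 1
  | _, _, Walk.nil, _ => by simp
  | _, x, Walk.cons (u := y) (v := z) h r', hp => by
    by_cases hm : x ∈ s(y, z)
    · rw [Sym2.mem_iff] at hm
      rcases hm with rfl | rfl
      · exfalso
        have := hp.support_nodup
        rw [Walk.support_cons, List.nodup_cons] at this
        exact this.1 r'.end_mem_support
      · have : r' = Walk.nil := Walk.isPath_iff_eq_nil.mp hp.of_cons
        subst this
        simp
    · have h0 := path_endpoint_countP_le_one r' hp.of_cons
      rw [Walk.edges_cons, List.countP_cons_of_neg (by simpa using hm)]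
      exact h0

lemma cycle_base_countP_le_two {x : V} (p : G.Walk x x) (hc : p.IsCycle) :
    p.edges.countP (fun e => x ∈ e) ≤ 2 := by
  cases p with
  | nil => exact absurd rfl hc.ne_nil
  | @cons _ z _ h r =>
    have hr : r.IsPath := ((Walk.cons_isCycle_iff r h).mp hc).1
    have := path_endpoint_countP_le_one r hr
    rw [Walk.edges_cons, List.countP_cons_of_pos (by simp)]
    omega

lemma cycle_countP_le_two {u : V} (p : G.Walk u u) (hc : p.IsCycle) (x : V) (hx : x ∈ p.support) :
    p.edges.countP (fun e => x ∈ e) ≤ 2 := by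
  have hperm : List.Perm (p.rotate x hx).edges p.edges := (p.rotate_edges x hx).perm
  rw [← hperm.countP_eq]
  exact cycle_base_countP_le_two _ (hc.rotate hx)

lemma cycle_two_nbrs {u : V} (p : G.Walk u u) (hc : p.IsCycle) (x : V) (hx : x ∈ p.support) :
    ∃ y z, y ≠ z ∧ s(x, y) ∈ p.edges ∧ s(x, z) ∈ p.edges := by
  have hperm : List.Perm (p.rotate x hx).edges p.edges := (p.rotate_edges x hx).perm
  suffices h : ∃ y z, y ≠ z ∧ s(x, y) ∈ (p.rotate x hx).edges ∧ s(x, z) ∈ (p.rotate x hx).edges by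
    obtain ⟨y, z, h1, h2, h3⟩ := h
    exact ⟨y, z, h1, hperm.mem_iff.mp h2, hperm.mem_iff.mp h3⟩
  have hq : (p.rotate x hx).IsCycle := hc.rotate hx
  generalize (p.rotate x hx) = q at hq ⊢
  cases q with
  | nil => exact absurd rfl hq.ne_nil
  | @cons _ w _ h r =>
    have hlen : 2 ≤ r.length := by
      have := hq.three_le_length
      simp only [Walk.length_cons] at this
      omega
    have hnn : ¬ r.reverse.Nil := by
      rw [Walk.nil_iff_length_eq, Walk.length_reverse]
      omega
    obtain ⟨w', h', r', hr'⟩ := (Walk.not_nil_iff).mp hnn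
    have hmem : s(x, w') ∈ r.edges := by
      have : s(x, w') ∈ r.reverse.edges := by rw [hr']; simp
      rwa [Walk.edges_reverse, List.mem_reverse] at this
    refine ⟨w, w', ?_, by simp, by simp [hmem]⟩
    rintro rfl
    have := hq.edges_nodup
    rw [Walk.edges_cons, List.nodup_cons] at this
    exact this.1 hmem

omit [DecidableEq V] in
lemma walk_closed {H : G.Subgraph} {S : V → Prop} (hS : ∀ x y, S x → H.Adj x y → S y) :
    ∀ {x y : V} (W : G.Walk x y), W.toSubgraph ≤ H → S y → S x := by
  intro x y W
  induction W with
  | nil => exact fun _ h => h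
  | @cons a c _ h W ih =>
    intro hle hy
    have hle1 : G.subgraphOfAdj h ≤ H := le_trans le_sup_left hle
    have hle2 : W.toSubgraph ≤ H := le_trans le_sup_right hle
    have hadj : H.Adj a c := hle1.2 (by simp)
    exact hS c a (ih hle2 hy) hadj.symm

lemma corner_contra {u v a b : V} (p : G.Walk u u) (hc : p.IsCycle)
    (hind : ∀ x ∈ p.support, ∀ y ∈ p.support, G.Adj x y → s(x, y) ∈ p.edges)
    (hlen : 4 ≤ p.length) (hv : v ∈ p.support)
    (hnb : ∀ y, G.Adj v y → y = a ∨ y = b) (hab : G.Adj a b) : False := by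
  obtain ⟨y, z, hyz, hey, hez⟩ := cycle_two_nbrs p hc v hv
  have hya := hnb y (p.adj_of_mem_edges hey)
  have hza := hnb z (p.adj_of_mem_edges hez)
  have hsa : s(v, a) ∈ p.edges ∧ s(v, b) ∈ p.edges := by
    rcases hya with rfl | rfl <;> rcases hza with rfl | rfl
    · exact absurd rfl hyz
    · exact ⟨hey, hez⟩
    · exact ⟨hez, hey⟩
    · exact absurd rfl hyz
  obtain ⟨hea, heb⟩ := hsa
  have hva : v ≠ a := (p.adj_of_mem_edges hea).ne
  have hvb : v ≠ b := (p.adj_of_mem_edges heb).ne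
  have hab' : a ≠ b := hab.ne
  have hamem : a ∈ p.support := p.snd_mem_support_of_mem_edges hea
  have hbmem : b ∈ p.support := p.snd_mem_support_of_mem_edges heb
  have heab : s(a, b) ∈ p.edges := hind a hamem b hbmem hab
  set S : V → Prop := fun x => x = v ∨ x = a ∨ x = b with hS
  have hcountP : ∀ c y w₁ w₂, c ≠ w₁ → c ≠ w₂ → c ≠ y → w₁ ≠ w₂ → y ≠ w₁ → y ≠ w₂ →
      s(c, w₁) ∈ p.edges → s(c, w₂) ∈ p.edges → s(c, y) ∈ p.edges → c ∈ p.support → False := by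
    intro c y w₁ w₂ h1 h2 h3 h4 h5 h6 e1 e2 e3 hcm
    have n1 : s(c, w₁) ≠ s(c, w₂) := by
      rw [Ne, Sym2.eq_iff]
      rintro (⟨-, h⟩ | ⟨h, -⟩)
      · exact h4 h
      · exact h2 h
    have n2 : s(c, w₁) ≠ s(c, y) := by
      rw [Ne, Sym2.eq_iff]
      rintro (⟨-, h⟩ | ⟨h, -⟩)
      · exact h5 h.symm
      · exact h3 h
    have n3 : s(c, w₂) ≠ s(c, y) := by
      rw [Ne, Sym2.eq_iff]
      rintro (⟨-, h⟩ | ⟨h, -⟩)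
      · exact h6 h.symm
      · exact h3 h
    have hnd : [s(c, w₁), s(c, w₂), s(c, y)].Nodup := by
      simp [n1, n2, n3]
    have hsub : [s(c, w₁), s(c, w₂), s(c, y)] ⊆ p.edges := by
      intro e he
      simp only [List.mem_cons, List.not_mem_nil, or_false] at he
      rcases he with rfl | rfl | rfl
      · exact e1
      · exact e2
      · exact e3
    have hsp := hnd.subperm hsub
    have h3le := hsp.countP_le (fun e => c ∈ e)
    simp only [List.countP_cons, List.countP_nil, Sym2.mem_iff, true_or, decide_true,
      if_true] at h3le
    have hle2 := cycle_countP_le_two p hc c hcm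
    omega
  have hclosed : ∀ x w, S x → p.toSubgraph.Adj x w → S w := by
    intro x w hx hadj
    have hedge : s(x, w) ∈ p.edges := by
      rw [← Walk.mem_edges_toSubgraph]
      exact hadj
    obtain h | h | h := hx <;> subst x
    · rcases hnb w (p.adj_of_mem_edges hedge) with rfl | rfl
      · exact Or.inr (Or.inl rfl)
      · exact Or.inr (Or.inr rfl)
    · by_contra hw
      have hw' : w ≠ v ∧ w ≠ a ∧ w ≠ b := by
        refine ⟨?_, ?_, ?_⟩ <;> (intro hh; exact hw (by simp [hS, hh]))
      exact hcountP a w v b hva.symm hab' (p.adj_of_mem_edges hedge).ne hvb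
        hw'.1 hw'.2.2
        (by rwa [Sym2.eq_swap]) heab hedge hamem
    · by_contra hw
      have hw' : w ≠ v ∧ w ≠ a ∧ w ≠ b := by
        refine ⟨?_, ?_, ?_⟩ <;> (intro hh; exact hw (by simp [hS, hh]))
      exact hcountP b w v a hvb.symm (Ne.symm hab') (p.adj_of_mem_edges hedge).ne hva
        hw'.1 hw'.2.1
        (by rwa [Sym2.eq_swap]) (by rwa [Sym2.eq_swap]) hedge hbmem
  have htail : p.support.tail.Nodup := hc.support_nodup
  have hlen' : p.support.tail.length = p.length := by
    have := p.length_support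
    have := p.support.length_tail
    omega
  have hex : ∃ w ∈ p.support.tail, ¬ S w := by
    by_contra hall
    push_neg at hall
    have hsub : p.support.tail ⊆ [v, a, b] := by
      intro w hw
      rcases hall w hw with rfl | rfl | rfl <;> simp
    have := (htail.subperm hsub).length_le
    rw [hlen'] at this
    simp only [List.length_cons, List.length_nil] at this
    omega
  obtain ⟨w, hwt, hwS⟩ := hex
  have hwm : w ∈ p.support := List.mem_of_mem_tail hwt
  have hconn := p.toSubgraph_connected
  have hw1 : w ∈ p.toSubgraph.verts := by simp [Walk.verts_toSubgraph, hwm]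
  have hv1 : v ∈ p.toSubgraph.verts := by simp [Walk.verts_toSubgraph, hv]
  obtain ⟨W, hW⟩ := (Subgraph.preconnected_iff_forall_exists_walk_subgraph
    p.toSubgraph).mp hconn.preconnected hw1 hv1
  exact hwS (walk_closed hclosed W hW (Or.inl rfl))

end Generic

section Concrete

abbrev Rg : Type := ZMod 3 × ZMod 3

lemma mem_jac_iff (x : Rg) : x ∈ Ideal.jacobson (⊥ : Ideal Rg) ↔ x = 0 := by
  constructor
  · intro h
    rw [Ideal.mem_jacobson_bot] at h
    by_contra h0
    exact (by decide : ∀ z : Rg, z ≠ 0 → ¬ ∀ y, IsUnit (z * y + 1)) x h0 h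
  · rintro rfl
    exact Submodule.zero_mem _

abbrev Vt : Type := {x : Rg // x ∉ Ideal.jacobson (⊥ : Ideal Rg)}

def vtx (z : Rg) (h : z ≠ 0) : Vt := ⟨z, fun hm => h ((mem_jac_iff z).mp hm)⟩

lemma adj_iff (x y : Vt) :
    (jacobsonGraph Rg).Adj x y ↔ ((x : Rg) ≠ (y : Rg) ∧ ¬ IsUnit (1 - (x : Rg) * (y : Rg))) := by
  constructor
  · rintro (⟨h1, h2⟩ : x ≠ y ∧ ¬ IsUnit (1 - (x : Rg) * y))
    exact ⟨fun h => h1 (Subtype.ext h), h2⟩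
  · rintro ⟨h1, h2⟩
    exact (⟨fun h => h1 (congrArg Subtype.val h), h2⟩ : x ≠ y ∧ ¬ IsUnit (1 - (x : Rg) * y))

def c11 : Vt := vtx (1, 1) (by decide)
def c12 : Vt := vtx (1, 2) (by decide)
def c21 : Vt := vtx (2, 1) (by decide)
def c22 : Vt := vtx (2, 2) (by decide)

lemma vt_ext {x y : Vt} (h : (x : Rg) = (y : Rg)) : x = y := Subtype.ext h

-- neighbor characterization for the four "corner" vertices
lemma corner_nbrs (t : Vt) :
    ((t : Rg) = (1, 0) → ∀ y : Vt, (jacobsonGraph Rg).Adj t y → y = c11 ∨ y = c12) ∧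
    ((t : Rg) = (2, 0) → ∀ y : Vt, (jacobsonGraph Rg).Adj t y → y = c21 ∨ y = c22) ∧
    ((t : Rg) = (0, 1) → ∀ y : Vt, (jacobsonGraph Rg).Adj t y → y = c11 ∨ y = c21) ∧
    ((t : Rg) = (0, 2) → ∀ y : Vt, (jacobsonGraph Rg).Adj t y → y = c12 ∨ y = c22) := by
  refine ⟨?_, ?_, ?_, ?_⟩ <;>
  · intro ht y hy
    rw [adj_iff, ht] at hy
    have key := (by decide :
      ∀ w z : Rg, (w = (1,0) ∨ w = (2,0) ∨ w = (0,1) ∨ w = (0,2)) →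
        (w ≠ z ∧ ¬ IsUnit (1 - w * z)) →
        (w.1 * z.1 = 1 ∨ w.2 * z.2 = 1)) 
    first
    | (rcases (by decide : ∀ z : Rg, (((1,0) : Rg) ≠ z ∧ ¬ IsUnit (1 - ((1,0) : Rg) * z)) →
          z = (1,1) ∨ z = (1,2)) _ hy with h | h
       · exact Or.inl (vt_ext h)
       · exact Or.inr (vt_ext h))
    | (rcases (by decide : ∀ z : Rg, (((2,0) : Rg) ≠ z ∧ ¬ IsUnit (1 - ((2,0) : Rg) * z)) →
          z = (2,1) ∨ z = (2,2)) _ hy with h | h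
       · exact Or.inl (vt_ext h)
       · exact Or.inr (vt_ext h))
    | (rcases (by decide : ∀ z : Rg, (((0,1) : Rg) ≠ z ∧ ¬ IsUnit (1 - ((0,1) : Rg) * z)) →
          z = (1,1) ∨ z = (2,1)) _ hy with h | h
       · exact Or.inl (vt_ext h)
       · exact Or.inr (vt_ext h))
    | (rcases (by decide : ∀ z : Rg, (((0,2) : Rg) ≠ z ∧ ¬ IsUnit (1 - ((0,2) : Rg) * z)) →
          z = (1,2) ∨ z = (2,2)) _ hy with h | h
       · exact Or.inl (vt_ext h)
       · exact Or.inr (vt_ext h))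

lemma adj_of_val {x y : Vt} (h : (x : Rg) ≠ (y : Rg) ∧ ¬ IsUnit (1 - (x : Rg) * (y : Rg))) :
    (jacobsonGraph Rg).Adj x y := (adj_iff x y).mpr h

end Concrete

/-- The longest induced cycle in the Jacobson graph of ℤ/3 ⊕ ℤ/3 has
length 4. -/
theorem jacobsonGraph_zmod3_zmod3_longest_induced_cycle :
    (∃ (u : {x : ZMod 3 × ZMod 3 // x ∉ Ideal.jacobson (⊥ : Ideal (ZMod 3 × ZMod 3))})
      (p : (jacobsonGraph (ZMod 3 × ZMod 3)).Walk u u),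
        IsInducedCycle p ∧ p.length = 4) ∧
    ∀ (u : {x : ZMod 3 × ZMod 3 // x ∉ Ideal.jacobson (⊥ : Ideal (ZMod 3 × ZMod 3))})
      (p : (jacobsonGraph (ZMod 3 × ZMod 3)).Walk u u),
        IsInducedCycle p → p.length ≤ 4 := by
  constructor
  · -- the induced 4-cycle c11 - c12 - c22 - c21 - c11
    have h1 : (jacobsonGraph Rg).Adj c11 c12 := adj_of_val ⟨by decide, by decide⟩
    have h2 : (jacobsonGraph Rg).Adj c12 c22 := adj_of_val ⟨by decide, by decide⟩
    have h3 : (jacobsonGraph Rg).Adj c22 c21 := adj_of_val ⟨by decide, by decide⟩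
    have h4 : (jacobsonGraph Rg).Adj c21 c11 := adj_of_val ⟨by decide, by decide⟩
    refine ⟨c11, .cons h1 (.cons h2 (.cons h3 (.cons h4 .nil))), ⟨?_, ?_⟩, rfl⟩
    · rw [Walk.isCycle_def]
      refine ⟨⟨?_⟩, by simp, ?_⟩
      · simp only [Walk.edges_cons, Walk.edges_nil]
        decide
      · simp only [Walk.support_cons, Walk.support_nil, List.tail_cons]
        decide
    · intro x hx y hy hadj
      simp only [Walk.support_cons, Walk.support_nil, List.mem_cons,
        List.not_mem_nil, or_false] at hx hy
      simp only [Walk.edges_cons, Walk.edges_nil]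
      rw [adj_iff] at hadj
      rcases hx with rfl | rfl | rfl | rfl | rfl <;>
        rcases hy with rfl | rfl | rfl | rfl | rfl <;>
        revert hadj <;> decide
  · rintro u p ⟨hc, hind⟩
    by_contra hle
    push_neg at hle
    have hlen5 : 5 ≤ p.length := hle
    have htail : p.support.tail.Nodup := hc.support_nodup
    have hlen' : p.support.tail.length = p.length := by
      have := p.length_support
      have := p.support.length_tail
      omega
    have hex : ∃ t ∈ p.support.tail, t ≠ c11 ∧ t ≠ c12 ∧ t ≠ c21 ∧ t ≠ c22 := by
      by_contra hall
      push_neg at hall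
      have hsub : p.support.tail ⊆ [c11, c12, c21, c22] := by
        intro t ht
        by_cases e1 : t = c11
        · simp [e1]
        by_cases e2 : t = c12
        · simp [e2]
        by_cases e3 : t = c21
        · simp [e3]
        have := hall t ht e1 e2 e3
        simp [this]
      have := (htail.subperm hsub).length_le
      rw [hlen'] at this
      simp only [List.length_cons, List.length_nil] at this
      omega
    obtain ⟨t, htt, ht1, ht2, ht3, ht4⟩ := hex
    have htm : t ∈ p.support := List.mem_of_mem_tail htt
    have ht0 : (t : Rg) ≠ 0 := fun h => t.2 ((mem_jac_iff _).mpr h)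
    have htv : (t : Rg) = (1,0) ∨ (t : Rg) = (2,0) ∨ (t : Rg) = (0,1) ∨ (t : Rg) = (0,2) := by
      have hv1 : (t : Rg) ≠ (1,1) := fun h => ht1 (vt_ext h)
      have hv2 : (t : Rg) ≠ (1,2) := fun h => ht2 (vt_ext h)
      have hv3 : (t : Rg) ≠ (2,1) := fun h => ht3 (vt_ext h)
      have hv4 : (t : Rg) ≠ (2,2) := fun h => ht4 (vt_ext h)
      exact (by decide : ∀ z : Rg, z ≠ 0 → z ≠ (1,1) → z ≠ (1,2) → z ≠ (2,1) → z ≠ (2,2) →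
        z = (1,0) ∨ z = (2,0) ∨ z = (0,1) ∨ z = (0,2)) _ ht0 hv1 hv2 hv3 hv4
    have hlen4 : 4 ≤ p.length := by omega
    rcases htv with h | h | h | h
    · exact corner_contra p hc hind hlen4 htm ((corner_nbrs t).1 h)
        (adj_of_val ⟨by decide, by decide⟩)
    · exact corner_contra p hc hind hlen4 htm ((corner_nbrs t).2.1 h)
        (adj_of_val ⟨by decide, by decide⟩)
    · exact corner_contra p hc hind hlen4 htm ((corner_nbrs t).2.2.1 h)
        (adj_of_val ⟨by decide, by decide⟩)
    · exact corner_contra p hc hind hlen4 htm ((corner_nbrs t).2.2.2 h)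
        (adj_of_val ⟨by decide, by decide⟩)
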